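/- The group G36 defined by the presentation ⟨a, b, c | a⁴ = b⁴ = c² = 1, [b,c] = 1, a⁻¹ba = b⁻¹, cac = a⁻¹⟩ has order 32. -/

import Mathlib

/-- The relations of the presentation
`G36 = ⟨a, b, c | a⁴ = b⁴ = c² = 1, [b,c] = 1, a⁻¹ba = b⁻¹, cac = a⁻¹⟩`,
with `a, b, c` the generators `FreeGroup.of 0, 1, 2`. -/

def Gc := ZMod 4 × ZMod 4 × ZMod 2
instance : Fintype Gc := inferInstanceAs (Fintype (ZMod 4 × ZMod 4 × ZMod 2))
instance : DecidableEq Gc := inferInstanceAs (DecidableEq (ZMod 4 × ZMod 4 × ZMod 2))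

/-- sign action -/
def gs (k : ZMod 2) (x : ZMod 4) : ZMod 4 := if k = 0 then x else -x
/-- parity -/
def gp (x : ZMod 4) : ZMod 2 := (x.val : ZMod 2)

theorem gs_add : ∀ (k : ZMod 2) (x y : ZMod 4), gs k (x + y) = gs k x + gs k y := by decide
theorem gs_gs : ∀ (k k' : ZMod 2) (x : ZMod 4), gs k (gs k' x) = gs (k + k') x := by decide
theorem gp_add : ∀ x y : ZMod 4, gp (x + y) = gp x + gp y := by decide
theorem gp_gs : ∀ (k : ZMod 2) (x : ZMod 4), gp (gs k x) = gp x := by decide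

def gmul (x y : Gc) : Gc :=
  (x.1 + gs (gp x.2.1) y.1, x.2.1 + gs x.2.2 y.2.1, x.2.2 + y.2.2)
def gone : Gc := ((0 : ZMod 4), (0 : ZMod 4), (0 : ZMod 2))
def ginv (x : Gc) : Gc :=
  (-(gs (gp x.2.1) x.1), -(gs x.2.2 x.2.1), -x.2.2)

theorem gassoc : ∀ x y z : Gc, gmul (gmul x y) z = gmul x (gmul y z) := by
  rintro ⟨i₁, j₁, k₁⟩ ⟨i₂, j₂, k₂⟩ ⟨i₃, j₃, k₃⟩
  simp only [gmul]
  refine Prod.ext ?_ (Prod.ext ?_ ?_)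
  · show i₁ + gs (gp j₁) i₂ + gs (gp (j₁ + gs k₁ j₂)) i₃ = i₁ + gs (gp j₁) (i₂ + gs (gp j₂) i₃)
    rw [gp_add, gp_gs, gs_add, gs_gs]; ring
  · show j₁ + gs k₁ j₂ + gs (k₁ + k₂) j₃ = j₁ + gs k₁ (j₂ + gs k₂ j₃)
    rw [gs_add, gs_gs]; ring
  · show k₁ + k₂ + k₃ = k₁ + (k₂ + k₃)
    ring

theorem gonemul : ∀ x : Gc, gmul gone x = x := by decide
theorem gmulone : ∀ x : Gc, gmul x gone = x := by decide
theorem ginvmul : ∀ x : Gc, gmul (ginv x) x = gone := by decide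

instance : Group Gc where
  mul := gmul
  one := gone
  inv := ginv
  mul_assoc := gassoc
  one_mul := gonemul
  mul_one := gmulone
  inv_mul_cancel := ginvmul

def A : Gc := ((0, 1, 0) : ZMod 4 × ZMod 4 × ZMod 2)
def B : Gc := ((1, 0, 0) : ZMod 4 × ZMod 4 × ZMod 2)
def C : Gc := ((0, 0, 1) : ZMod 4 × ZMod 4 × ZMod 2)

theorem Gc_inj : ∀ p q : Fin 4 × Fin 4 × Fin 2,
    B ^ (p.1 : ℕ) * A ^ (p.2.1 : ℕ) * C ^ (p.2.2 : ℕ) =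
      B ^ (q.1 : ℕ) * A ^ (q.2.1 : ℕ) * C ^ (q.2.2 : ℕ) → p = q := by decide

theorem Gc_rels : A ^ 4 = 1 ∧ B ^ 4 = 1 ∧ C ^ 2 = 1 ∧
    B * C * B⁻¹ * C⁻¹ = 1 ∧ A⁻¹ * B * A * B = 1 ∧ C * A * C * A = 1 := by decide

def G36rels : Set (FreeGroup (Fin 3)) :=
  { (FreeGroup.of 0) ^ 4, (FreeGroup.of 1) ^ 4, (FreeGroup.of 2) ^ 2,
    FreeGroup.of 1 * FreeGroup.of 2 * (FreeGroup.of 1)⁻¹ * (FreeGroup.of 2)⁻¹,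
    (FreeGroup.of 0)⁻¹ * FreeGroup.of 1 * FreeGroup.of 0 * FreeGroup.of 1,
    FreeGroup.of 2 * FreeGroup.of 0 * FreeGroup.of 2 * FreeGroup.of 0 }

namespace G36aux

abbrev P := PresentedGroup G36rels
def a : P := PresentedGroup.of 0
def b : P := PresentedGroup.of 1
def c : P := PresentedGroup.of 2

theorem relP : ∀ r ∈ G36rels, PresentedGroup.mk G36rels r = 1 := fun r hr =>
  (QuotientGroup.eq_one_iff r).2 (Subgroup.subset_normalClosure hr)

theorem ha : a ^ 4 = 1 := by
  have := relP _ (Set.mem_insert _ _)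
  simpa [map_pow, a, PresentedGroup.of] using this

theorem hb : b ^ 4 = 1 := by
  have := relP _ (Set.mem_insert_of_mem _ (Set.mem_insert _ _))
  simpa [map_pow, b, PresentedGroup.of] using this

theorem hc : c ^ 2 = 1 := by
  have := relP _ (Set.mem_insert_of_mem _ (Set.mem_insert_of_mem _ (Set.mem_insert _ _)))
  simpa [map_pow, c, PresentedGroup.of] using this

theorem hbc : b * c * b⁻¹ * c⁻¹ = 1 := by
  have := relP _ (Set.mem_insert_of_mem _ (Set.mem_insert_of_mem _ (Set.mem_insert_of_mem _
    (Set.mem_insert _ _))))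
  simpa [map_mul, map_inv, b, c, PresentedGroup.of] using this

theorem hab0 : a⁻¹ * b * a * b = 1 := by
  have := relP _ (Set.mem_insert_of_mem _ (Set.mem_insert_of_mem _ (Set.mem_insert_of_mem _
    (Set.mem_insert_of_mem _ (Set.mem_insert _ _)))))
  simpa [map_mul, map_inv, a, b, PresentedGroup.of] using this

theorem hca0 : c * a * c * a = 1 := by
  have := relP _ (Set.mem_insert_of_mem _ (Set.mem_insert_of_mem _ (Set.mem_insert_of_mem _
    (Set.mem_insert_of_mem _ (Set.mem_insert_of_mem _ rfl)))))
  simpa [map_mul, a, c, PresentedGroup.of] using this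

end G36aux

namespace G36aux

theorem hcinv : c⁻¹ = c := by
  have h : c * c = 1 := by rw [← pow_two]; exact hc
  exact inv_eq_of_mul_eq_one_right h

theorem hainv : a⁻¹ = a ^ 3 := by
  have h : a * a ^ 3 = 1 := by rw [← pow_succ']; exact ha
  exact inv_eq_of_mul_eq_one_right h

theorem hbinv : b⁻¹ = b ^ 3 := by
  have h : b * b ^ 3 = 1 := by rw [← pow_succ']; exact hb
  exact inv_eq_of_mul_eq_one_right h

theorem hab : a * b = b ^ 3 * a := by
  -- from hab0 : a⁻¹ * b * a * b = 1
  have h1 : a⁻¹ * b * a = b⁻¹ := mul_eq_one_iff_eq_inv.mp hab0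
  have h2 : a⁻¹ * b⁻¹ * a = b := by
    have := congrArg (·⁻¹) h1
    simpa [mul_inv_rev, mul_assoc] using this
  have h3 : a * b = b⁻¹ * a := by
    conv_lhs => rw [← h2]
    group
  rw [h3, hbinv]

theorem hca : c * a = a ^ 3 * c := by
  have h1 : c * a * c = a⁻¹ := mul_eq_one_iff_eq_inv.mp hca0
  calc c * a = (c * a * c) * c⁻¹ := by group
    _ = a⁻¹ * c⁻¹ := by rw [h1]
    _ = a ^ 3 * c := by rw [hainv, hcinv]

theorem hcb : c * b = b * c := by
  have h1 : b * c * b⁻¹ = c := by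
    have := mul_eq_one_iff_eq_inv.mp hbc
    simpa using this
  conv_lhs => rw [← h1]
  group

end G36aux

namespace G36aux

theorem Lab : ∀ m : ℕ, a * b ^ m = b ^ (3 * m) * a := by
  intro m
  induction m with
  | zero => simp
  | succ m ih =>
    calc a * b ^ (m + 1) = (a * b ^ m) * b := by rw [pow_succ, mul_assoc]
      _ = b ^ (3 * m) * (a * b) := by rw [ih, mul_assoc]
      _ = b ^ (3 * m) * (b ^ 3 * a) := by rw [hab]
      _ = b ^ (3 * (m + 1)) * a := by rw [← mul_assoc, ← pow_add]; ring_nf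

theorem LabE : ∀ n m : ℕ, ∃ p : ℕ, a ^ n * b ^ m = b ^ p * a ^ n := by
  intro n
  induction n with
  | zero => exact fun m => ⟨m, by simp⟩
  | succ n ih =>
    intro m
    obtain ⟨p, hp⟩ := ih (3 * m)
    refine ⟨p, ?_⟩
    calc a ^ (n + 1) * b ^ m = a ^ n * (a * b ^ m) := by rw [pow_succ, mul_assoc]
      _ = a ^ n * (b ^ (3 * m) * a) := by rw [Lab]
      _ = (a ^ n * b ^ (3 * m)) * a := by rw [mul_assoc]
      _ = b ^ p * a ^ (n + 1) := by rw [hp, mul_assoc, ← pow_succ]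

theorem Lca : ∀ m : ℕ, c * a ^ m = a ^ (3 * m) * c := by
  intro m
  induction m with
  | zero => simp
  | succ m ih =>
    calc c * a ^ (m + 1) = (c * a ^ m) * a := by rw [pow_succ, mul_assoc]
      _ = a ^ (3 * m) * (c * a) := by rw [ih, mul_assoc]
      _ = a ^ (3 * m) * (a ^ 3 * c) := by rw [hca]
      _ = a ^ (3 * (m + 1)) * c := by rw [← mul_assoc, ← pow_add]; ring_nf

theorem LcaE : ∀ k m : ℕ, ∃ q : ℕ, c ^ k * a ^ m = a ^ q * c ^ k := by
  intro k
  induction k with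
  | zero => exact fun m => ⟨m, by simp⟩
  | succ k ih =>
    intro m
    obtain ⟨q, hq⟩ := ih (3 * m)
    refine ⟨q, ?_⟩
    calc c ^ (k + 1) * a ^ m = c ^ k * (c * a ^ m) := by rw [pow_succ, mul_assoc]
      _ = c ^ k * (a ^ (3 * m) * c) := by rw [Lca]
      _ = (c ^ k * a ^ (3 * m)) * c := by rw [mul_assoc]
      _ = a ^ q * c ^ (k + 1) := by rw [hq, mul_assoc, ← pow_succ]

theorem Lcb : ∀ k m : ℕ, c ^ k * b ^ m = b ^ m * c ^ k := by
  have hC : Commute c b := hcb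
  exact fun k m => (hC.pow_pow k m)

def S : Subgroup P where
  carrier := {x | ∃ i j k : ℕ, x = b ^ i * a ^ j * c ^ k}
  one_mem' := ⟨0, 0, 0, by simp⟩
  mul_mem' := by
    rintro x y ⟨i, j, k, rfl⟩ ⟨i', j', k', rfl⟩
    obtain ⟨p, hp⟩ := LabE j i'
    obtain ⟨q, hq⟩ := LcaE k j'
    refine ⟨i + p, j + q, k + k', ?_⟩
    calc (b ^ i * a ^ j * c ^ k) * (b ^ i' * a ^ j' * c ^ k')
        = b ^ i * (a ^ j * ((c ^ k * b ^ i') * (a ^ j' * c ^ k'))) := by group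
      _ = b ^ i * (a ^ j * ((b ^ i' * c ^ k) * (a ^ j' * c ^ k'))) := by rw [Lcb]
      _ = b ^ i * ((a ^ j * b ^ i') * ((c ^ k * a ^ j') * c ^ k')) := by group
      _ = b ^ i * ((b ^ p * a ^ j) * ((a ^ q * c ^ k) * c ^ k')) := by rw [hp, hq]
      _ = (b ^ i * b ^ p) * ((a ^ j * a ^ q) * (c ^ k * c ^ k')) := by group
      _ = b ^ (i + p) * a ^ (j + q) * c ^ (k + k') := by
          rw [← pow_add, ← pow_add, ← pow_add, mul_assoc]
  inv_mem' := by
    rintro x ⟨i, j, k, rfl⟩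
    obtain ⟨q, hq⟩ := LcaE k (3 * j)
    obtain ⟨p, hp⟩ := LabE q (3 * i)
    refine ⟨p, q, k, ?_⟩
    show (b ^ i * a ^ j * c ^ k)⁻¹ = _
    have h1 : (b ^ i * a ^ j * c ^ k)⁻¹ = c ^ k * (a ^ (3 * j) * b ^ (3 * i)) := by
      rw [mul_inv_rev, mul_inv_rev, ← inv_pow, ← inv_pow, ← inv_pow, hcinv, hainv, hbinv,
        ← pow_mul, ← pow_mul]
    rw [h1]
    calc c ^ k * (a ^ (3 * j) * b ^ (3 * i))
        = (c ^ k * a ^ (3 * j)) * b ^ (3 * i) := by group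
      _ = (a ^ q * c ^ k) * b ^ (3 * i) := by rw [hq]
      _ = a ^ q * (c ^ k * b ^ (3 * i)) := by group
      _ = a ^ q * (b ^ (3 * i) * c ^ k) := by rw [Lcb]
      _ = (a ^ q * b ^ (3 * i)) * c ^ k := by group
      _ = (b ^ p * a ^ q) * c ^ k := by rw [hp]

theorem memS : ∀ x : P, ∃ i j k : ℕ, x = b ^ i * a ^ j * c ^ k := by
  intro x
  refine PresentedGroup.generated_by G36rels S ?_ x
  intro j
  fin_cases j
  · exact ⟨0, 1, 0, by simp [a]⟩
  · exact ⟨1, 0, 0, by simp [b]⟩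
  · exact ⟨0, 0, 1, by simp [c]⟩

end G36aux

namespace G36aux

def f : Fin 3 → Gc
  | 0 => A
  | 1 => B
  | 2 => C

theorem frels : ∀ r ∈ G36rels, FreeGroup.lift f r = 1 := by
  intro r hr
  simp only [G36rels, Set.mem_insert_iff, Set.mem_singleton_iff] at hr
  rcases hr with rfl | rfl | rfl | rfl | rfl | rfl
  · rw [map_pow, FreeGroup.lift_apply_of]; exact Gc_rels.1
  · rw [map_pow, FreeGroup.lift_apply_of]; exact Gc_rels.2.1
  · rw [map_pow, FreeGroup.lift_apply_of]; exact Gc_rels.2.2.1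
  · simp only [map_mul, map_inv, FreeGroup.lift_apply_of]; exact Gc_rels.2.2.2.1
  · simp only [map_mul, map_inv, FreeGroup.lift_apply_of]; exact Gc_rels.2.2.2.2.1
  · simp only [map_mul, FreeGroup.lift_apply_of]; exact Gc_rels.2.2.2.2.2

noncomputable def phi : P →* Gc := PresentedGroup.toGroup frels

theorem phia : phi a = A := PresentedGroup.toGroup.of frels
theorem phib : phi b = B := PresentedGroup.toGroup.of frels
theorem phic : phi c = C := PresentedGroup.toGroup.of frels

def theta (p : Fin 4 × Fin 4 × Fin 2) : P :=
  b ^ (p.1 : ℕ) * a ^ (p.2.1 : ℕ) * c ^ (p.2.2 : ℕ)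

theorem pow_mod (x : P) (n e : ℕ) (h : x ^ e = 1) : x ^ (n % e) = x ^ n := by
  conv_rhs => rw [← Nat.div_add_mod n e]
  rw [pow_add, pow_mul, h, one_pow, one_mul]

theorem theta_surj : Function.Surjective theta := by
  intro x
  obtain ⟨i, j, k, rfl⟩ := memS x
  refine ⟨(⟨i % 4, Nat.mod_lt _ (by norm_num)⟩, ⟨j % 4, Nat.mod_lt _ (by norm_num)⟩,
    ⟨k % 2, Nat.mod_lt _ (by norm_num)⟩), ?_⟩
  show b ^ (i % 4) * a ^ (j % 4) * c ^ (k % 2) = b ^ i * a ^ j * c ^ k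
  rw [pow_mod b i 4 hb, pow_mod a j 4 ha, pow_mod c k 2 hc]

theorem theta_inj : Function.Injective theta := by
  intro p q h
  apply Gc_inj
  have h2 := congrArg phi h
  simpa only [theta, map_mul, map_pow, phia, phib, phic] using h2

end G36aux

/-- The group `G36` defined by the presentation
`⟨a, b, c | a⁴ = b⁴ = c² = 1, [b,c] = 1, a⁻¹ba = b⁻¹, cac = a⁻¹⟩` has order 32. -/
theorem G36_card : Nat.card (PresentedGroup G36rels) = 32 := by
  have h := Nat.card_eq_of_bijective G36aux.theta ⟨G36aux.theta_inj, G36aux.theta_surj⟩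
  rw [← h]
  simp [Nat.card_eq_fintype_card]
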